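/- Let S be a symmetric positive definite n×n real matrix and let m be a nonzero vector in ℝⁿ. Then for every nonzero w ∈ ℝⁿ, (w·m)/√(wᵀSw) ≤ √(mᵀS⁻¹m), with equality if and only if w = c·S⁻¹m for some c > 0. Consequently, among all linear classifiers on two independent Gaussian classes x₊ ∼ N(μ₊,Σ₊) and x₋ ∼ N(μ₋,Σ₋) with Σ₊+Σ₋ positive definite and μ₊ ≠ μ₋, the AUC value Φ(w·(μ₊−μ₋)/√(wᵀ(Σ₊+Σ₋)w)) is maximized exactly by w = c·(Σ₊+Σ₋)⁻¹(μ₊−μ₋) with c > 0. -/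

import Mathlib

open Matrix MeasureTheory ProbabilityTheory

/-- Cauchy–Schwarz-type bound for the quadratic-form ratio, with equality case. -/
lemma key_ratio (n : ℕ) (S : Matrix (Fin n) (Fin n) ℝ) (hS : S.PosDef)
    (m : Fin n → ℝ) (hm : m ≠ 0) (w : Fin n → ℝ) (hw : w ≠ 0) :
    (w ⬝ᵥ m) / Real.sqrt (w ⬝ᵥ S.mulVec w) ≤ Real.sqrt (m ⬝ᵥ S⁻¹.mulVec m) ∧
    ((w ⬝ᵥ m) / Real.sqrt (w ⬝ᵥ S.mulVec w) = Real.sqrt (m ⬝ᵥ S⁻¹.mulVec m) ↔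
      ∃ c : ℝ, 0 < c ∧ w = c • S⁻¹.mulVec m) := by
  set v := S⁻¹.mulVec m with hv_def
  have hpos : ∀ x : Fin n → ℝ, x ≠ 0 → 0 < x ⬝ᵥ S.mulVec x := fun x hx => by
    simpa using hS.dotProduct_mulVec_pos hx
  have hsym : ∀ x y : Fin n → ℝ, x ⬝ᵥ S.mulVec y = y ⬝ᵥ S.mulVec x := fun x y => by
    rw [dotProduct_mulVec, ← mulVec_transpose, show Sᵀ = S from hS.1, dotProduct_comm]
  have hSv : S.mulVec v = m := by
    rw [hv_def, mulVec_mulVec, mul_nonsing_inv _ hS.det_pos.ne'.isUnit, one_mulVec]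
  have hv : v ≠ 0 := by
    intro h; apply hm; rw [← hSv, h, mulVec_zero]
  have hmv : m ⬝ᵥ v = v ⬝ᵥ m := dotProduct_comm _ _
  set a := w ⬝ᵥ S.mulVec w with ha_def
  set b := w ⬝ᵥ m with hb_def
  set c := v ⬝ᵥ m with hc_def
  have ha : 0 < a := hpos w hw
  have hc : 0 < c := by
    have := hpos v hv; rwa [hSv] at this
  have hb_eq : b = w ⬝ᵥ S.mulVec v := by rw [hb_def, hSv]
  -- Cauchy–Schwarz via z = c•w - b•v
  have hexpand : (c • w - b • v) ⬝ᵥ S.mulVec (c • w - b • v) = c * (c * a - b * b) := by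
    have h1 : w ⬝ᵥ S.mulVec v = b := hb_eq.symm
    have h2 : v ⬝ᵥ S.mulVec v = c := by rw [hSv, hc_def]
    simp only [mulVec_smul, mulVec_sub, dotProduct_sub, sub_dotProduct, smul_dotProduct,
      dotProduct_smul, smul_eq_mul, ← hSv]
    rw [hsym v w]
    simp only [h1, h2]
    all_goals ring
  have hCS : b * b ≤ c * a := by
    nlinarith [hS.posSemidef.dotProduct_mulVec_nonneg (c • w - b • v), hexpand,
      (by simpa using hS.posSemidef.dotProduct_mulVec_nonneg (c • w - b • v) :
        (0:ℝ) ≤ (c • w - b • v) ⬝ᵥ S.mulVec (c • w - b • v))]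
  have hsa : 0 < Real.sqrt a := Real.sqrt_pos.mpr ha
  have hrhs : Real.sqrt (m ⬝ᵥ S⁻¹.mulVec m) = Real.sqrt c := by rw [← hv_def, hmv]
  have hineq : b / Real.sqrt a ≤ Real.sqrt c := by
    rw [div_le_iff₀ hsa]
    rcases le_or_gt b 0 with hb | hb
    · exact hb.trans (by positivity)
    · have : b ≤ Real.sqrt (c * a) := by
        rw [show c * a = b * b + (c * a - b * b) by ring]
        calc b = Real.sqrt (b * b) := by rw [Real.sqrt_mul_self hb.le]
        _ ≤ _ := Real.sqrt_le_sqrt (by nlinarith)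
      rwa [Real.sqrt_mul hc.le] at this
  refine ⟨hrhs ▸ hineq, ?_⟩
  rw [hrhs]
  constructor
  · intro heq
    have hb : b = Real.sqrt c * Real.sqrt a := by
      field_simp at heq; linarith [heq]
    have hbpos : 0 < b := by rw [hb]; positivity
    have hb2 : b * b = c * a := by
      rw [hb]; rw [mul_mul_mul_comm, Real.mul_self_sqrt hc.le, Real.mul_self_sqrt ha.le]
    have hz : c • w - b • v = 0 := by
      by_contra hz
      have := hpos _ hz
      rw [hexpand] at this
      nlinarith
    refine ⟨b / c, by positivity, ?_⟩
    have hcw : c • w = b • v := by rwa [sub_eq_zero] at hz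
    funext i
    have hcwi := congrFun hcw i
    simp only [Pi.smul_apply, smul_eq_mul] at hcwi ⊢
    field_simp
    linarith [hcwi]
  · rintro ⟨t, ht, rfl⟩
    rw [← hv_def] at *
    have hb' : b = t * c := by
      simp only [hb_def, smul_dotProduct, smul_eq_mul, ← hc_def]
    have ha' : a = t * t * c := by
      simp only [ha_def, smul_dotProduct, mulVec_smul, dotProduct_smul, smul_eq_mul, hSv,
        ← hc_def]
      ring
    have hsq : Real.sqrt a = t * Real.sqrt c := by
      rw [ha', Real.sqrt_mul (by positivity : (0:ℝ) ≤ t * t), Real.sqrt_mul_self ht.le]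
    rw [hb', hsq, div_eq_iff (by positivity : (0:ℝ) < t * Real.sqrt c).ne']
    nlinarith [Real.mul_self_sqrt hc.le]

/-- The standard normal cdf is strictly monotone. -/
lemma strictMono_cdf_gaussian : StrictMono (cdf (gaussianReal 0 1)) := by
  intro x y hxy
  have hIoc : gaussianReal 0 1 (Set.Ioc x y) ≠ 0 := by
    intro h
    have h2 := (gaussianReal_absolutelyContinuous' 0 (by norm_num)) h
    rw [Real.volume_Ioc] at h2
    simp [ENNReal.ofReal_eq_zero, hxy] at h2
    linarith
  have hsplit : gaussianReal 0 1 (Set.Iic y)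
      = gaussianReal 0 1 (Set.Iic x) + gaussianReal 0 1 (Set.Ioc x y) := by
    rw [← measure_union (Set.Iic_disjoint_Ioc le_rfl) measurableSet_Ioc,
      Set.Iic_union_Ioc_eq_Iic hxy.le]
  have hlt : gaussianReal 0 1 (Set.Iic x) < gaussianReal 0 1 (Set.Iic y) := by
    rw [hsplit]
    exact ENNReal.lt_add_right (measure_ne_top _ _) hIoc
  rw [cdf_eq_real, cdf_eq_real, measureReal_def, measureReal_def]
  exact ENNReal.toReal_strict_mono (measure_ne_top _ _) hlt

/-- Let `S` be a symmetric positive definite `n × n` real matrix and `m ≠ 0`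
a vector in `ℝⁿ`. Then for every nonzero `w`,
`(w ⬝ m)/√(wᵀ S w) ≤ √(mᵀ S⁻¹ m)`, with equality iff `w = c • S⁻¹ m` for some
`c > 0`. Consequently, among all linear classifiers on two independent
Gaussian classes `x₊ ∼ N(μ₊, Σ₊)`, `x₋ ∼ N(μ₋, Σ₋)` with `Σ₊ + Σ₋` positive
definite and `μ₊ ≠ μ₋`, the AUC value
`Φ(w ⬝ (μ₊ - μ₋)/√(wᵀ (Σ₊+Σ₋) w))` (with `Φ` the standard normal CDF) is
maximized exactly by `w = c • (Σ₊+Σ₋)⁻¹ (μ₊ - μ₋)` with `c > 0`. -/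
theorem quadratic_ratio_max_and_optimal_AUC
    (n : ℕ) (S : Matrix (Fin n) (Fin n) ℝ) (hS : S.PosDef)
    (m : Fin n → ℝ) (hm : m ≠ 0) :
    (∀ w : Fin n → ℝ, w ≠ 0 →
      (w ⬝ᵥ m) / Real.sqrt (w ⬝ᵥ S.mulVec w) ≤ Real.sqrt (m ⬝ᵥ S⁻¹.mulVec m) ∧
      ((w ⬝ᵥ m) / Real.sqrt (w ⬝ᵥ S.mulVec w) = Real.sqrt (m ⬝ᵥ S⁻¹.mulVec m) ↔
        ∃ c : ℝ, 0 < c ∧ w = c • S⁻¹.mulVec m)) ∧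
    (∀ (Sp Sm : Matrix (Fin n) (Fin n) ℝ) (μp μm : Fin n → ℝ),
      (Sp + Sm).PosDef → μp ≠ μm →
      ∀ w : Fin n → ℝ, w ≠ 0 →
        cdf (gaussianReal 0 1)
            (w ⬝ᵥ (μp - μm) / Real.sqrt (w ⬝ᵥ (Sp + Sm).mulVec w)) ≤
          cdf (gaussianReal 0 1)
            ((Sp + Sm)⁻¹.mulVec (μp - μm) ⬝ᵥ (μp - μm) /
              Real.sqrt ((Sp + Sm)⁻¹.mulVec (μp - μm) ⬝ᵥ
                (Sp + Sm).mulVec ((Sp + Sm)⁻¹.mulVec (μp - μm)))) ∧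
        (cdf (gaussianReal 0 1)
            (w ⬝ᵥ (μp - μm) / Real.sqrt (w ⬝ᵥ (Sp + Sm).mulVec w)) =
          cdf (gaussianReal 0 1)
            ((Sp + Sm)⁻¹.mulVec (μp - μm) ⬝ᵥ (μp - μm) /
              Real.sqrt ((Sp + Sm)⁻¹.mulVec (μp - μm) ⬝ᵥ
                (Sp + Sm).mulVec ((Sp + Sm)⁻¹.mulVec (μp - μm)))) ↔
          ∃ c : ℝ, 0 < c ∧ w = c • (Sp + Sm)⁻¹.mulVec (μp - μm))) := by
  constructor
  · exact fun w hw => key_ratio n S hS m hm w hw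
  · intro Sp Sm μp μm hPD hne w hw
    set T := Sp + Sm with hT
    set μ := μp - μm with hμ
    have hμ0 : μ ≠ 0 := sub_ne_zero.mpr hne
    set v := T⁻¹.mulVec μ with hv_def
    have hTv : T.mulVec v = μ := by
      rw [hv_def, mulVec_mulVec, mul_nonsing_inv _ hPD.det_pos.ne'.isUnit, one_mulVec]
    have hv : v ≠ 0 := by
      intro h; apply hμ0; rw [← hTv, h, mulVec_zero]
    have hvμ : 0 < v ⬝ᵥ μ := by
      have := hPD.dotProduct_mulVec_pos hv
      simpa [hTv] using this
    -- the optimal value equals the bound of key_ratio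
    have hopt' : v ⬝ᵥ μ / Real.sqrt (v ⬝ᵥ T.mulVec v)
        = Real.sqrt (μ ⬝ᵥ T⁻¹.mulVec μ) := by
      rw [hTv, Real.div_sqrt, ← hv_def, dotProduct_comm]
    have hkey := key_ratio n T hPD μ hμ0 w hw
    refine ⟨?_, ?_⟩
    · apply monotone_cdf
      rw [hopt']
      exact hkey.1
    · rw [strictMono_cdf_gaussian.injective.eq_iff, hopt']
      exact hkey.2
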